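/- Suppose (a_*, a'_*) ∈ 𝔖_r^M × 𝔖_r^M satisfies for some k and a: (a_k, a_{k+1}) = (a, a+2), (a'_k, a'_{k+1}) = (a+1, a+1), and a_s = a'_s for s ≠ k, k+1. Then at least one of the following holds: (i) (a_*, a'_*) is induced; (ii) for t sufficiently large, (a'_*^{!t}, a_*^{!t}) is induced; (iii) (a_*, a'_*) is equivalent (under simultaneously prepending 0,0 to both sequences and incrementing all entries by 1) to one of the pairs ((0,2),(1,1)), ((0,0,2),(0,1,1)), ((0,2,2),(1,1,2)), ((0,0,2,2),(0,1,1,2)). -/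

import Mathlib

/-- 𝔗_r^m : strictly increasing length-m sequences of naturals summing to r + m(m-1)/2. -/
def TT (r m : ℕ) : Set (List ℕ) :=
  {l | l.length = m ∧ l.Pairwise (· < ·) ∧ l.sum = r + m * (m - 1) / 2}

/-- Complement of `l` in `{0,1,...,t}`: remove `t - a` for each entry `a` of `l`. -/
def complA (t : ℕ) (l : List ℕ) : List ℕ :=
  (List.range (t + 1)).filter (fun x => decide ((t - x) ∉ l))

/-- 𝔖_r^M (for given ε): weakly increasing length-M sequences, each value occurring
at most twice, with sum r + (M² - 2M + ε)/4. -/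
def SS (r M ε : ℕ) : Set (List ℕ) :=
  {l | l.length = M ∧ l.Pairwise (· ≤ ·) ∧ (∀ x, l.count x ≤ 2) ∧
    l.sum = r + (M ^ 2 - 2 * M + ε) / 4}

/-- Complement of `l` in the multiset `{0,0,1,1,...,t,t}`, as a sorted list. -/
def complB (t : ℕ) (l : List ℕ) : List ℕ :=
  (List.range (t + 1)).flatMap (fun x => List.replicate (2 - l.count (t - x)) x)

/-- Subtract 1 from each of the last `k` entries. -/
def decLast (k : ℕ) (l : List ℕ) : List ℕ :=
  l.take (l.length - k) ++ (l.drop (l.length - k)).map (fun x => x - 1)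

def InducedT (r : ℕ) (l l' : List ℕ) : Prop :=
  ∃ k₀, 1 ≤ k₀ ∧ k₀ ≤ r ∧ decLast k₀ l ∈ TT (r - k₀) l.length ∧
    decLast k₀ l' ∈ TT (r - k₀) l'.length

def InducedS (r ε : ℕ) (l l' : List ℕ) : Prop :=
  ∃ k₀, 1 ≤ k₀ ∧ k₀ ≤ r ∧ decLast k₀ l ∈ SS (r - k₀) l.length ε ∧
    decLast k₀ l' ∈ SS (r - k₀) l'.length ε

def shA (l : List ℕ) : List ℕ := 0 :: l.map (· + 1)
def shS (l : List ℕ) : List ℕ := 0 :: 0 :: l.map (· + 1)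

def EquivA (l l' : List ℕ) : Prop := ∃ i j, shA^[i] l = shA^[j] l'
def EquivS (l l' : List ℕ) : Prop := ∃ i j, shS^[i] l = shS^[j] l'

def PairEquivA (p q : List ℕ × List ℕ) : Prop :=
  ∃ i j, shA^[i] p.1 = shA^[j] q.1 ∧ shA^[i] p.2 = shA^[j] q.2
def PairEquivS (p q : List ℕ × List ℕ) : Prop :=
  ∃ i j, shS^[i] p.1 = shS^[j] q.1 ∧ shS^[i] p.2 = shS^[j] q.2

/-- The pattern: entries (a, a+p) in `l` and (a+1, a+p-1) in `l'` at the same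
consecutive positions, all other entries equal. -/
def PairP (p : ℕ) (l l' : List ℕ) : Prop :=
  ∃ a u v, l = u ++ [a, a + p] ++ v ∧ l' = u ++ [a + 1, a + p - 1] ++ v

/-- (b, b+2, b+3, ..., b+p-2, b+p) -/
def listA (p b : ℕ) : List ℕ :=
  (b :: (List.range (p - 3)).map (fun i => b + 2 + i)) ++ [b + p]
/-- (b+1, b+2, ..., b+p-1) -/
def listA' (p b : ℕ) : List ℕ :=
  (List.range (p - 1)).map (fun i => b + 1 + i)

/-- (b, b+1, b+2, b+2, ..., b+p-2, b+p-2, b+p-1, b+p) -/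
def listB (p b : ℕ) : List ℕ :=
  b :: (b + 1) :: ((List.range (p - 3)).flatMap fun i => [b + 2 + i, b + 2 + i]) ++
    [b + p - 1, b + p]
/-- (b+1, b+1, b+2, b+2, ..., b+p-1, b+p-1) -/
def listB' (p b : ℕ) : List ℕ :=
  (List.range (p - 1)).flatMap fun i => [b + 1 + i, b + 1 + i]

/-- The multiset of parts (a_i - i), zero parts removed. -/
def partsOf (l : List ℕ) : Multiset ℕ :=
  ↑((((List.range l.length).zip l).map fun p => p.2 - p.1).filter fun x => decide (x ≠ 0))

/-- Conjugate (transpose) of a multiset of parts. -/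
def conjParts (s : Multiset ℕ) : Multiset ℕ :=
  Multiset.filter (fun x => x ≠ 0)
    ↑((List.range s.sum).map fun j => Multiset.card (Multiset.filter (fun x => j + 1 ≤ x) s))

open List Finset

/-- map-pred trick -/
lemma map_pred_succ (S : List ℕ) (h : ∀ y ∈ S, 1 ≤ y) :
    (S.map (fun x => x - 1)).map (fun x => x + 1) = S := by
  rw [List.map_map]
  have : ∀ y ∈ S, ((fun x => x + 1) ∘ fun x => x - 1) y = id y := by
    intro y hy; have := h y hy; simp only [Function.comp_apply, id_eq]; omega
  rw [List.map_congr_left this, List.map_id]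

lemma count_map_pred (S : List ℕ) (h : ∀ y ∈ S, 1 ≤ y) (z : ℕ) :
    (S.map (fun x => x - 1)).count z = S.count (z + 1) := by
  conv_rhs => rw [← map_pred_succ S h]
  exact (List.count_map_of_injective _ (fun x => x + 1)
    (fun a b hab => by simpa using hab) z).symm

lemma sum_map_add_one (S : List ℕ) : (S.map (fun x => x + 1)).sum = S.sum + S.length := by
  induction S with
  | nil => simp
  | cons a S ih => simp [ih]; omega

lemma sum_map_pred (S : List ℕ) (h : ∀ y ∈ S, 1 ≤ y) :
    (S.map (fun x => x - 1)).sum + S.length = S.sum := by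
  have := sum_map_add_one (S.map (fun x => x - 1))
  rw [map_pred_succ S h] at this
  simp at this ⊢; omega

lemma sum_count_range (l : List ℕ) (Y : ℕ) :
    ∑ y ∈ range Y, l.count y = (l.filter (fun v => decide (v < Y))).length := by
  induction l with
  | nil => simp
  | cons a l ih =>
    by_cases ha : a < Y
    · have h2 : ∑ y ∈ range Y, (a :: l).count y
          = (∑ y ∈ range Y, l.count y) + ∑ y ∈ range Y, (if y = a then 1 else 0) := by
        rw [← Finset.sum_add_distrib]
        apply Finset.sum_congr rfl; intro y _
        rw [List.count_cons]
        by_cases hy : y = a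
        · simp [hy]
        · simp [hy]; omega
      rw [h2, Finset.sum_ite_eq' (range Y) a (fun _ => 1)]
      simp [ha, ih, List.filter_cons]
    · have h2 : ∑ y ∈ range Y, (a :: l).count y = ∑ y ∈ range Y, l.count y := by
        apply Finset.sum_congr rfl; intro y hy
        simp only [Finset.mem_range] at hy
        rw [List.count_cons]
        have hya : ¬ (y = a) := by omega
        simp [hya]; omega
      rw [h2, ih]; simp [List.filter_cons, ha]

lemma sum_count_mul_range (l : List ℕ) (Y : ℕ) :
    ∑ y ∈ range Y, l.count y * y = (l.filter (fun v => decide (v < Y))).sum := by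
  induction l with
  | nil => simp
  | cons a l ih =>
    by_cases ha : a < Y
    · have h2 : ∑ y ∈ range Y, (a :: l).count y * y
          = (∑ y ∈ range Y, l.count y * y) + ∑ y ∈ range Y, (if y = a then a else 0) := by
        rw [← Finset.sum_add_distrib]
        apply Finset.sum_congr rfl; intro y _
        rw [List.count_cons]
        by_cases hy : y = a
        · simp [hy]; ring
        · simp [hy]; omega
      rw [h2, Finset.sum_ite_eq' (range Y) a (fun _ => a)]
      simp [ha, ih, List.filter_cons]; omega
    · have h2 : ∑ y ∈ range Y, (a :: l).count y * y = ∑ y ∈ range Y, l.count y * y := by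
        apply Finset.sum_congr rfl; intro y hy
        simp only [Finset.mem_range] at hy
        rw [List.count_cons]
        have hya : ¬ (y = a) := by omega
        simp [hya]; omega
      rw [h2, ih]; simp [List.filter_cons, ha]

lemma filter_lt_eq_self (l : List ℕ) (Y : ℕ) (h : ∀ x ∈ l, x < Y) :
    l.filter (fun v => decide (v < Y)) = l := by
  apply List.filter_eq_self.2; intro a ha; simpa using h a ha

lemma length_le_two_mul (l : List ℕ) (B : ℕ) (hb : ∀ x ∈ l, x ≤ B)
    (hc : ∀ x, l.count x ≤ 2) : l.length ≤ 2 * (B + 1) := by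
  have h1 : ∑ y ∈ range (B+1), l.count y = l.length := by
    rw [sum_count_range, filter_lt_eq_self]
    intro x hx; exact Nat.lt_succ_of_le (hb x hx)
  calc l.length = ∑ y ∈ range (B+1), l.count y := h1.symm
    _ ≤ ∑ y ∈ range (B+1), 2 := Finset.sum_le_sum (fun i _ => hc i)
    _ = 2 * (B+1) := by simp [mul_comm]

def msum (m : ℕ) : ℕ := ∑ i ∈ range m, i / 2

lemma msum_succ (m : ℕ) : msum (m + 1) = msum m + m / 2 := Finset.sum_range_succ _ _

lemma msum_step (m : ℕ) : msum (m + 2) = msum m + m := by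
  rw [show m+2 = (m+1)+1 from rfl, msum_succ, msum_succ]; omega

lemma msum_closed (ε n : ℕ) (hε : ε ≤ 1) : msum (ε + 2 * n) + n = n * n + ε * n := by
  induction n with
  | zero => interval_cases ε <;> simp [msum]
  | succ m ih =>
    have h1 : ε + 2 * (m + 1) = (ε + 2 * m) + 2 := by ring
    rw [h1, msum_step]
    have h2 : (m + 1) * (m + 1) = m * m + 2 * m + 1 := by ring
    have h3 : ε * (m + 1) = ε * m + ε := by ring
    rw [h2, h3]
    generalize m * m = K at *
    generalize ε * m = E at *
    omega

lemma cEq (ε n : ℕ) (hε : ε ≤ 1) :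
    ((ε + 2 * n) ^ 2 - 2 * (ε + 2 * n) + ε) / 4 = msum (ε + 2 * n) := by
  have hm := msum_closed ε n hε
  interval_cases ε
  · rw [show (0 + 2*n)^2 = 4*(n*n) from by ring]
    simp at hm ⊢
    generalize n * n = K at *
    omega
  · rw [show (1 + 2*n)^2 = 4*(n*n) + 4*n + 1 from by ring]
    generalize n * n = K at *
    omega

/-- sorted + counts ≤ 2 gives min sum -/
lemma msum_le_sum : ∀ (L : List ℕ), L.Pairwise (· ≤ ·) → (∀ x, L.count x ≤ 2) →
    msum L.length ≤ L.sum := by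
  intro L
  induction L using List.reverseRecOn with
  | nil => simp [msum]
  | append_singleton L b ih =>
    intro hs hc
    have hsL : L.Pairwise (· ≤ ·) := hs.sublist (List.sublist_append_left _ _)
    have hcL : ∀ x, L.count x ≤ 2 := by
      intro x
      exact le_trans (List.Sublist.count_le x (List.sublist_append_left _ _)) (hc x)
    have hble : ∀ x ∈ L ++ [b], x ≤ b := by
      intro x hx
      rcases List.mem_append.1 hx with h | h
      · rcases List.pairwise_append.1 hs with ⟨_, _, hcr⟩
        exact hcr x h b (by simp)
      · simp at h; omega
    have hlen : (L ++ [b]).length ≤ 2 * (b + 1) := by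
      have := length_le_two_mul (L ++ [b]) b hble hc
      simpa using this
    have hb2 : L.length / 2 ≤ b := by
      simp at hlen; omega
    have := ih hsL hcL
    have hgoal : msum (L.length + 1) ≤ L.sum + b := by
      rw [msum_succ]; omega
    simpa using hgoal

def InducedSB (r ε : ℕ) (l l' : List ℕ) : Prop :=
  ∃ k₀, 1 ≤ k₀ ∧ k₀ ≤ r ∧ k₀ ≤ l.length ∧ k₀ ≤ l'.length ∧
    (∀ y ∈ l.drop (l.length - k₀), 1 ≤ y) ∧ (∀ y ∈ l'.drop (l'.length - k₀), 1 ≤ y) ∧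
    decLast k₀ l ∈ SS (r - k₀) l.length ε ∧ decLast k₀ l' ∈ SS (r - k₀) l'.length ε

lemma inducedSB_weaken {r ε : ℕ} {l l' : List ℕ} (h : InducedSB r ε l l') :
    InducedS r ε l l' := by
  obtain ⟨k, h1, h2, _, _, _, _, h5, h6⟩ := h
  exact ⟨k, h1, h2, h5, h6⟩

def kf (w : ℕ) (L : List ℕ) : ℕ := (L.filter (fun y => decide (w < y))).length

lemma sorted_decomp (L : List ℕ) (hs : L.Pairwise (· ≤ ·)) (w : ℕ) :
    L = L.filter (fun y => decide (y ≤ w)) ++ L.filter (fun y => decide (w < y)) := by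
  have hperm : (L.filter (fun y => decide (y ≤ w)) ++ L.filter (fun y => decide (w < y))).Perm L := by
    have := List.filter_append_perm (fun y => decide (y ≤ w)) L
    have heq : L.filter (fun x => !decide (x ≤ w)) = L.filter (fun y => decide (w < y)) := by
      apply List.filter_congr
      intro x _
      by_cases h : x ≤ w
      · have h2 : ¬ w < x := by omega
        simp [h, h2]
      · have h2 : w < x := by omega
        simp [h, h2]
    rwa [heq] at this
  have hsorted : (L.filter (fun y => decide (y ≤ w)) ++ L.filter (fun y => decide (w < y))).Pairwise (· ≤ ·) := by
    refine List.pairwise_append.2 ⟨hs.filter _, hs.filter _, ?_⟩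
    intro x hx y hy
    have hx' := (List.mem_filter.1 hx).2
    have hy' := (List.mem_filter.1 hy).2
    simp at hx' hy'; omega
  exact (List.Perm.eq_of_pairwise' hsorted hs hperm).symm

/-- key cut lemma -/
lemma cut_half (r ε n M : ℕ) (hε : ε ≤ 1) (hM : M = ε + 2 * n) (L : List ℕ)
    (hL : L ∈ SS r M ε) (w : ℕ)
    (hcnt : L.count w + L.count (w + 1) ≤ 2) (hex : ∃ y ∈ L, w < y) :
    1 ≤ kf w L ∧ kf w L ≤ r ∧ kf w L ≤ M ∧
      (∀ y ∈ L.drop (L.length - kf w L), 1 ≤ y) ∧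
      decLast (kf w L) L ∈ SS (r - kf w L) M ε := by
  obtain ⟨hlen, hsort, hcount, hsum⟩ := hL
  set P := L.filter (fun y => decide (y ≤ w)) with hP
  set S := L.filter (fun y => decide (w < y)) with hS
  have hdec : L = P ++ S := sorted_decomp L hsort w
  have hSge : ∀ y ∈ S, w + 1 ≤ y := by
    intro y hy; have := (List.mem_filter.1 hy).2; simp at this; omega
  have hSpos : ∀ y ∈ S, 1 ≤ y := fun y hy => le_trans (by omega) (hSge y hy)
  have hPle : ∀ x ∈ P, x ≤ w := by
    intro x hx; have := (List.mem_filter.1 hx).2; simpa using this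
  have hlen2 : P.length + S.length = M := by
    rw [← hlen]; conv_rhs => rw [hdec]
    simp
  have hk : kf w L = S.length := rfl
  -- the decremented list
  set L2 := P ++ S.map (fun x => x - 1) with hL2
  have hdecLast : decLast (kf w L) L = L2 := by
    unfold decLast
    rw [hk, hlen]
    have h1 : M - S.length = P.length := by omega
    rw [h1]
    conv_lhs => rw [hdec]
    rw [List.take_left, List.drop_left]
  -- counts of L2
  have hcnt2 : ∀ z, L2.count z ≤ 2 := by
    intro z
    have hcP : P.count z = if z ≤ w then L.count z else 0 := by
      by_cases hz : z ≤ w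
      · rw [if_pos hz, hP, List.count_filter (by simpa using hz)]
      · rw [if_neg hz, List.count_eq_zero]
        intro hmem; exact hz (hPle z hmem)
    have hcS : (S.map (fun x => x - 1)).count z = S.count (z+1) :=
      count_map_pred S hSpos z
    have hcS2 : S.count (z+1) = if w < z + 1 then L.count (z+1) else 0 := by
      by_cases hz : w < z + 1
      · rw [if_pos hz, hS, List.count_filter (by simpa using hz)]
      · rw [if_neg hz, List.count_eq_zero]
        intro hmem; exact hz (hSge _ hmem)
    rw [hL2, List.count_append, hcP, hcS, hcS2]
    have hcz := hcount z
    have hcz1 := hcount (z+1)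
    by_cases h1 : z < w
    · rw [if_pos (by omega), if_neg (by omega)]; omega
    · by_cases h2 : z = w
      · subst h2; rw [if_pos (by omega), if_pos (by omega)]; omega
      · rw [if_neg (by omega), if_pos (by omega)]; omega
  -- sorted
  have hsort2 : L2.Pairwise (· ≤ ·) := by
    rw [hL2]
    refine List.pairwise_append.2 ⟨hsort.filter _, ?_, ?_⟩
    · have hSsort : S.Pairwise (· ≤ ·) := hsort.filter _
      exact List.Pairwise.map _ (fun a b hab => by omega) hSsort
    · intro x hx y hy
      obtain ⟨y', hy', rfl⟩ := List.mem_map.1 hy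
      have := hSge y' hy'
      have := hPle x hx
      omega
  -- length
  have hlen3 : L2.length = M := by
    rw [hL2]; simp; omega
  -- sum
  have hsum2 : L2.sum + S.length = L.sum := by
    rw [hL2]
    conv_rhs => rw [hdec]
    simp only [List.sum_append]
    have := sum_map_pred S hSpos
    omega
  have hc : (M ^ 2 - 2 * M + ε) / 4 = msum M := by rw [hM]; exact cEq ε n hε
  have hmin : msum M ≤ L2.sum := by
    have := msum_le_sum L2 hsort2 hcnt2
    rwa [hlen3] at this
  have hknonempty : 1 ≤ kf w L := by
    obtain ⟨y, hy, hwy⟩ := hex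
    have : y ∈ S := List.mem_filter.2 ⟨hy, by simpa using hwy⟩
    rw [hk]
    exact List.length_pos_of_mem this
  have hkr : kf w L ≤ r := by
    rw [hk]
    rw [hc] at hsum
    omega
  have hdroppos : ∀ y ∈ L.drop (L.length - kf w L), 1 ≤ y := by
    rw [hk, hlen]
    have h1 : M - S.length = P.length := by omega
    rw [h1]
    conv in L.drop _ => rw [hdec]
    rw [List.drop_left]
    exact hSpos
  refine ⟨hknonempty, hkr, by rw [hk]; omega, hdroppos, ?_⟩
  rw [hdecLast]
  refine ⟨hlen3, hsort2, hcnt2, ?_⟩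
  rw [hc] at hsum ⊢
  rw [hk]
  omega

lemma induced_of_cut (r ε n M w : ℕ) (hε : ε ≤ 1) (hM : M = ε + 2 * n)
    (l l' : List ℕ) (hl : l ∈ SS r M ε) (hl' : l' ∈ SS r M ε)
    (h1 : l.count w + l.count (w + 1) ≤ 2) (h1' : l'.count w + l'.count (w + 1) ≤ 2)
    (he : ∃ y ∈ l, w < y) (he' : ∃ y ∈ l', w < y)
    (hk : kf w l = kf w l') : InducedSB r ε l l' := by
  obtain ⟨ha1, ha2, ha3, ha5, ha4⟩ := cut_half r ε n M hε hM l hl w h1 he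
  obtain ⟨hb1, hb2, hb3, hb5, hb4⟩ := cut_half r ε n M hε hM l' hl' w h1' he'
  refine ⟨kf w l, ha1, ha2, ?_, ?_, ha5, by rw [hk]; exact hb5, ?_, ?_⟩
  · rw [hl.1]; exact ha3
  · rw [hl'.1, hk]; exact hb3
  · rw [hl.1]; exact ha4
  · rw [hl'.1, hk]; exact hb4

/-! ### mkL machinery -/

def mkL (g : ℕ → ℕ) (m : ℕ) : List ℕ :=
  (List.range m).flatMap (fun x => List.replicate (g x) x)

lemma complB_eq_mkL (t : ℕ) (l : List ℕ) :
    complB t l = mkL (fun x => 2 - l.count (t - x)) (t + 1) := rfl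

lemma mkL_succ (g : ℕ → ℕ) (m : ℕ) :
    mkL g (m + 1) = mkL g m ++ List.replicate (g m) m := by
  unfold mkL
  rw [List.range_succ, List.flatMap_append]
  simp

lemma mkL_mem (g : ℕ → ℕ) (m : ℕ) : ∀ x ∈ mkL g m, x < m := by
  intro x hx
  unfold mkL at hx
  obtain ⟨b, hb, hx⟩ := List.mem_flatMap.1 hx
  have := List.eq_of_mem_replicate hx
  subst this
  exact List.mem_range.1 hb

lemma mkL_sorted (g : ℕ → ℕ) (m : ℕ) : (mkL g m).Pairwise (· ≤ ·) := by
  induction m with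
  | zero => simp [mkL]
  | succ m ih =>
    rw [mkL_succ]
    refine List.pairwise_append.2 ⟨ih, ?_, ?_⟩
    · exact List.pairwise_replicate.2 (Or.inr le_rfl)
    · intro a ha b hb
      have := mkL_mem g m a ha
      have := List.eq_of_mem_replicate hb
      omega

lemma mkL_count (g : ℕ → ℕ) (m : ℕ) (z : ℕ) :
    (mkL g m).count z = if z < m then g z else 0 := by
  induction m with
  | zero => simp [mkL]
  | succ m ih =>
    rw [mkL_succ, List.count_append, ih, List.count_replicate]
    by_cases hz : z = m
    · subst hz; simp
    · have h2 : ¬ (m == z) = true := by simpa using fun h => hz h.symm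
      rw [if_neg h2]
      by_cases h3 : z < m
      · rw [if_pos h3, if_pos (by omega)]; omega
      · rw [if_neg h3, if_neg (by omega)]

lemma mkL_length (g : ℕ → ℕ) (m : ℕ) :
    (mkL g m).length = ∑ x ∈ Finset.range m, g x := by
  induction m with
  | zero => simp [mkL]
  | succ m ih =>
    rw [mkL_succ, List.length_append, ih, List.length_replicate, Finset.sum_range_succ]

lemma mkL_sum (g : ℕ → ℕ) (m : ℕ) :
    (mkL g m).sum = ∑ x ∈ Finset.range m, g x * x := by
  induction m with
  | zero => simp [mkL]
  | succ m ih =>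
    rw [mkL_succ, List.sum_append, ih, List.sum_replicate, Finset.sum_range_succ, smul_eq_mul]

lemma mkL_filter_le_length (g : ℕ → ℕ) (w : ℕ) : ∀ m, w + 1 ≤ m →
    ((mkL g m).filter (fun y => decide (y ≤ w))).length = ∑ x ∈ Finset.range (w + 1), g x := by
  intro m
  induction m with
  | zero => omega
  | succ m ih =>
    intro hm
    rw [mkL_succ, List.filter_append, List.length_append, List.filter_replicate]
    by_cases hcase : w + 1 ≤ m
    · have h2 : ¬ (m ≤ w) := by omega
      rw [ih hcase]
      simp [h2]
    · have hm2 : m = w := by omega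
      subst hm2
      simp only [decide_true, le_refl, if_pos]
      rw [Finset.sum_range_succ, ← mkL_length]
      have : (mkL g m).filter (fun y => decide (y ≤ m)) = mkL g m := by
        apply List.filter_eq_self.2
        intro a ha
        have := mkL_mem g m a ha
        simp; omega
      rw [this]; simp

lemma mkL_congr (g g' : ℕ → ℕ) (m : ℕ) (h : ∀ x, x < m → g x = g' x) :
    mkL g m = mkL g' m := by
  unfold mkL
  rw [List.flatMap, List.flatMap]
  congr 1
  apply List.map_congr_left
  intro x hx
  rw [h x (List.mem_range.1 hx)]

lemma sum_two_sub (t : ℕ) (c : ℕ → ℕ) (hc : ∀ y, c y ≤ 2) (m : ℕ) :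
    (∑ y ∈ Finset.range m, (2 - c y)) + ∑ y ∈ Finset.range m, c y = 2 * m := by
  rw [← Finset.sum_add_distrib]
  have : ∀ y ∈ Finset.range m, (2 - c y) + c y = 2 := by
    intro y _; have := hc y; omega
  rw [Finset.sum_congr rfl this]
  simp [mul_comm]

lemma complB_length (t : ℕ) (l : List ℕ) (hb : ∀ x ∈ l, x ≤ t)
    (hc : ∀ x, l.count x ≤ 2) :
    (complB t l).length + l.length = 2 * (t + 1) := by
  rw [complB_eq_mkL, mkL_length]
  have hrefl := Finset.sum_range_reflect (fun y => 2 - l.count y) (t + 1)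
  have : ∀ j ∈ Finset.range (t+1), 2 - l.count (t + 1 - 1 - j) = 2 - l.count (t - j) := by
    intro j _; norm_num
  rw [Finset.sum_congr rfl this] at hrefl
  rw [hrefl]
  have hM : ∑ y ∈ Finset.range (t+1), l.count y = l.length := by
    rw [sum_count_range, filter_lt_eq_self l (t+1) (fun x hx => by have := hb x hx; omega)]
  have := sum_two_sub t (fun y => l.count y) hc (t+1)
  omega

lemma complB_count (t : ℕ) (l : List ℕ) (z : ℕ) :
    (complB t l).count z = if z < t + 1 then 2 - l.count (t - z) else 0 := by
  rw [complB_eq_mkL, mkL_count]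

lemma complB_sorted (t : ℕ) (l : List ℕ) : (complB t l).Pairwise (· ≤ ·) :=
  mkL_sorted _ _

lemma comp_arith (ε n s t : ℕ) (hε : ε ≤ 1) (hts : t + 1 = s + n + ε) :
    (t+1)*t + (n*n + ε*n) + s = (ε + 2*n)*t + (s*s + ε*s) + n := by
  zify at hts ⊢
  linear_combination ((t:ℤ) + s - n) * hts

lemma self_le_sq (n ε : ℕ) : n ≤ n * n + ε * n := by
  rcases Nat.eq_zero_or_pos n with h | h
  · simp [h]
  · calc n = n * 1 := by ring
      _ ≤ n * n := Nat.mul_le_mul_left n h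
      _ ≤ n * n + ε * n := Nat.le_add_right _ _

lemma complB_mem_SS (r M ε n t : ℕ) (hε : ε ≤ 1) (hM : M = ε + 2 * n)
    (l : List ℕ) (hl : l ∈ SS r M ε) (hb : ∀ x ∈ l, x ≤ t) :
    complB t l ∈ SS r (2 * (t + 1) - M) ε ∧ (complB t l).length = 2 * (t + 1) - M ∧
      2 * (t + 1) - M = ε + 2 * (t + 1 - n - ε) ∧ n + ε ≤ t + 1 := by
  obtain ⟨hlen, hsort, hcount, hsum⟩ := hl
  have hMle : M ≤ 2 * (t + 1) := by
    rw [← hlen]; exact length_le_two_mul l t hb hcount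
  have hlenC := complB_length t l hb hcount
  have hne : n + ε ≤ t + 1 := by
    rcases Nat.eq_zero_or_pos ε with h | h
    · omega
    · have hε1 : ε = 1 := by omega
      subst hε1
      -- M odd, M ≤ 2t+2 so M ≤ 2t+1
      omega
  set s := t + 1 - n - ε with hs
  have hts : t + 1 = s + n + ε := by omega
  have hMbar : 2 * (t + 1) - M = ε + 2 * s := by omega
  -- sum computation
  have hsumC : (complB t l).sum + M * t = (t+1) * t + l.sum := by
    rw [complB_eq_mkL, mkL_sum]
    have hrefl := Finset.sum_range_reflect (fun y => (2 - l.count y) * (t - y)) (t + 1)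
    have he1 : ∀ j ∈ Finset.range (t+1),
        (2 - l.count (t + 1 - 1 - j)) * (t - (t + 1 - 1 - j)) = (2 - l.count (t - j)) * j := by
      intro j hj; simp only [Finset.mem_range] at hj
      have h1 : t + 1 - 1 - j = t - j := by omega
      have h2 : t - (t - j) = j := by omega
      rw [h1, h2]
    rw [Finset.sum_congr rfl he1] at hrefl
    rw [hrefl]
    -- now sum over y of (2 - c y) * (t - y)
    have F1 : (∑ y ∈ Finset.range (t+1), (2 - l.count y) * (t - y))
        + (∑ y ∈ Finset.range (t+1), l.count y * (t - y))
        = ∑ y ∈ Finset.range (t+1), 2 * (t - y) := by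
      rw [← Finset.sum_add_distrib]
      apply Finset.sum_congr rfl
      intro y _
      have := hcount y
      rw [← Nat.add_mul]
      congr 1; omega
    have F2 : (∑ y ∈ Finset.range (t+1), l.count y * (t - y))
        + (∑ y ∈ Finset.range (t+1), l.count y * y)
        = ∑ y ∈ Finset.range (t+1), l.count y * t := by
      rw [← Finset.sum_add_distrib]
      apply Finset.sum_congr rfl
      intro y hy
      simp only [Finset.mem_range] at hy
      rw [← Nat.mul_add]
      congr 1; omega
    have F3 : ∑ y ∈ Finset.range (t+1), l.count y * y = l.sum := by
      rw [sum_count_mul_range, filter_lt_eq_self l (t+1) (fun x hx => by have := hb x hx; omega)]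
    have F4 : ∑ y ∈ Finset.range (t+1), l.count y * t = M * t := by
      rw [← Finset.sum_mul]
      congr 1
      rw [sum_count_range, filter_lt_eq_self l (t+1) (fun x hx => by have := hb x hx; omega), hlen]
    have F5 : ∑ y ∈ Finset.range (t+1), 2 * (t - y) = (t+1) * t := by
      rw [← Finset.mul_sum]
      have : ∑ y ∈ Finset.range (t+1), (t - y) = ∑ y ∈ Finset.range (t+1), y := by
        have := Finset.sum_range_reflect (fun y => y) (t + 1)
        rw [← this]
        apply Finset.sum_congr rfl
        intro y hy; simp only [Finset.mem_range] at hy; omega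
      rw [this]
      have := Finset.sum_range_id_mul_two (t+1)
      simp at this
      omega
    linarith
  -- assemble
  have hcX := self_le_sq s ε
  have hcY := self_le_sq n ε
  obtain ⟨X, hX⟩ := Nat.le.dest hcX  -- s + X = s*s + ε*s
  obtain ⟨Y, hY⟩ := Nat.le.dest hcY
  have hmsumM : (M ^ 2 - 2 * M + ε) / 4 = Y := by
    rw [hM, cEq ε n hε]
    have := msum_closed ε n hε
    omega
  have hmsumMbar : ((2 * (t+1) - M) ^ 2 - 2 * (2 * (t+1) - M) + ε) / 4 = X := by
    rw [hMbar, cEq ε s hε]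
    have := msum_closed ε s hε
    omega
  have harith := comp_arith ε n s t hε hts
  have hsum2 : (complB t l).sum = r + X := by
    rw [hmsumM] at hsum
    rw [hM] at hsumC
    linarith
  refine ⟨⟨?_, complB_sorted t l, ?_, ?_⟩, by omega, by omega, hne⟩
  · omega
  · intro x
    rw [complB_count]
    split <;> omega
  · rw [hsum2, hmsumMbar]

lemma complB_kf (t w : ℕ) (l : List ℕ) (hb : ∀ x ∈ l, x ≤ t)
    (hc : ∀ x, l.count x ≤ 2) (hw : w ≤ t) :
    kf w (complB t l) + (l.filter (fun v => decide (v < t - w))).length = 2 * (t - w) := by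
  have hlenC := complB_length t l hb hc
  have hPS := sorted_decomp (complB t l) (complB_sorted t l) w
  have hlen2 : ((complB t l).filter (fun y => decide (y ≤ w))).length + kf w (complB t l)
      = (complB t l).length := by
    conv_rhs => rw [hPS]
    rw [List.length_append]; rfl
  have hfle : ((complB t l).filter (fun y => decide (y ≤ w))).length
      = ∑ x ∈ Finset.range (w+1), (2 - l.count (t - x)) := by
    rw [complB_eq_mkL]
    exact mkL_filter_le_length _ w (t+1) (by omega)
  have h2s := sum_two_sub 0 (fun x => l.count (t - x)) (fun x => hc _) (w+1)
  have hrefl : ∑ x ∈ Finset.range (w+1), l.count (t - x)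
      = ∑ x ∈ Finset.range (w+1), l.count (t - w + x) := by
    have := Finset.sum_range_reflect (fun x => l.count (t - w + x)) (w+1)
    rw [← this]
    apply Finset.sum_congr rfl
    intro x hx; simp only [Finset.mem_range] at hx
    congr 1; omega
  have hico : ∑ x ∈ Finset.range (w+1), l.count (t - w + x)
      = ∑ x ∈ Finset.Ico (t-w) (t+1), l.count x := by
    rw [Finset.sum_Ico_eq_sum_range]
    have h1 : t + 1 - (t - w) = w + 1 := by omega
    rw [h1]
  have hsplit : (∑ x ∈ Finset.range (t-w), l.count x) + ∑ x ∈ Finset.Ico (t-w) (t+1), l.count x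
      = ∑ x ∈ Finset.range (t+1), l.count x := by
    simp only [Finset.range_eq_Ico]
    exact Finset.sum_Ico_consecutive _ (by omega) (by omega)
  have hF : ∑ x ∈ Finset.range (t-w), l.count x = (l.filter (fun v => decide (v < t - w))).length :=
    sum_count_range l (t-w)
  have hMfull : ∑ x ∈ Finset.range (t+1), l.count x = l.length := by
    rw [sum_count_range, filter_lt_eq_self l (t+1) (fun x hx => by have := hb x hx; omega)]
  omega

lemma mem_sum_le (l : List ℕ) (x : ℕ) (hx : x ∈ l) : x ≤ l.sum :=
  List.single_le_sum (fun _ _ => Nat.zero_le _) x hx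

lemma induced_compl (r ε n M y : ℕ) (hε : ε ≤ 1) (hM : M = ε + 2 * n)
    (l l' : List ℕ) (hl : l ∈ SS r M ε) (hl' : l' ∈ SS r M ε)
    (hcnt : 2 ≤ l.count y + l.count (y + 1)) (hcnt' : 2 ≤ l'.count y + l'.count (y + 1))
    (hdef : ∃ z, z ≤ y ∧ l.count z ≤ 1) (hdef' : ∃ z, z ≤ y ∧ l'.count z ≤ 1)
    (hflt : (l.filter (fun v => decide (v < y + 1))).length
      = (l'.filter (fun v => decide (v < y + 1))).length) :
    ∃ T, ∀ t, T ≤ t → InducedSB r ε (complB t l') (complB t l) := by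
  refine ⟨l.sum + l'.sum + y + 2, fun t ht => ?_⟩
  have hb : ∀ x ∈ l, x ≤ t := fun x hx => le_trans (mem_sum_le l x hx) (by omega)
  have hb' : ∀ x ∈ l', x ≤ t := fun x hx => le_trans (mem_sum_le l' x hx) (by omega)
  have hyt : y + 2 ≤ t := by omega
  obtain ⟨hmem, hlenC, hMbar, hne⟩ := complB_mem_SS r M ε n t hε hM l hl hb
  obtain ⟨hmem', hlenC', _, _⟩ := complB_mem_SS r M ε n t hε hM l' hl' hb'
  set w := t - y - 1 with hwdef
  have hw1 : w < t + 1 := by omega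
  have hw2 : w + 1 < t + 1 := by omega
  have htw : t - w = y + 1 := by omega
  have htw1 : t - (w + 1) = y := by omega
  -- count conditions
  have hcntC : (complB t l).count w + (complB t l).count (w + 1) ≤ 2 := by
    rw [complB_count, complB_count, if_pos hw1, if_pos hw2, htw, htw1]
    have := hl.2.2.1 y
    have := hl.2.2.1 (y+1)
    omega
  have hcntC' : (complB t l').count w + (complB t l').count (w + 1) ≤ 2 := by
    rw [complB_count, complB_count, if_pos hw1, if_pos hw2, htw, htw1]
    have := hl'.2.2.1 y
    have := hl'.2.2.1 (y+1)
    omega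
  -- existence
  have hex : ∃ el ∈ complB t l, w < el := by
    obtain ⟨z, hz, hzc⟩ := hdef
    refine ⟨t - z, ?_, by omega⟩
    rw [← List.count_pos_iff, complB_count, if_pos (by omega)]
    have h1 : t - (t - z) = z := by omega
    rw [h1]; omega
  have hex' : ∃ el ∈ complB t l', w < el := by
    obtain ⟨z, hz, hzc⟩ := hdef'
    refine ⟨t - z, ?_, by omega⟩
    rw [← List.count_pos_iff, complB_count, if_pos (by omega)]
    have h1 : t - (t - z) = z := by omega
    rw [h1]; omega
  -- kf equality
  have hkf := complB_kf t w l hb hl.2.2.1 (by omega)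
  have hkf' := complB_kf t w l' hb' hl'.2.2.1 (by omega)
  rw [htw] at hkf hkf'
  have hkeq : kf w (complB t l') = kf w (complB t l) := by omega
  exact induced_of_cut r ε (t + 1 - n - ε) (2 * (t + 1) - M) w hε hMbar
    (complB t l') (complB t l) hmem' hmem hcntC' hcntC hex' hex hkeq

lemma count_shS (l₀ : List ℕ) (z : ℕ) :
    (shS l₀).count z = if z = 0 then 2 else l₀.count (z - 1) := by
  unfold shS
  rw [List.count_cons, List.count_cons]
  by_cases hz : z = 0
  · subst hz
    simp only [if_pos rfl]
    have : (l₀.map (fun x => x + 1)).count 0 = 0 := by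
      rw [List.count_eq_zero]
      intro hmem
      obtain ⟨y, _, hy⟩ := List.mem_map.1 hmem
      omega
    simp at this ⊢
    omega
  · rw [if_neg hz]
    obtain ⟨z', rfl⟩ : ∃ z', z = z' + 1 := ⟨z - 1, by omega⟩
    have : (l₀.map (fun x => x + 1)).count (z' + 1) = l₀.count z' := by
      have := List.count_map_of_injective l₀ (fun x => x + 1)
        (fun a b hab => by simpa using hab) z'
      simpa using this
    simp [hz]
    omega

lemma shS_mem (r ε n M : ℕ) (hε : ε ≤ 1) (hM : M = ε + 2 * n) (hn : 1 ≤ n)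
    (l₀ : List ℕ) (h : l₀ ∈ SS r (M - 2) ε) : shS l₀ ∈ SS r M ε := by
  obtain ⟨hlen, hsort, hcount, hsum⟩ := h
  have hM2 : M - 2 = ε + 2 * (n - 1) := by omega
  refine ⟨?_, ?_, ?_, ?_⟩
  · unfold shS; simp [hlen]; omega
  · unfold shS
    rw [List.pairwise_cons]
    constructor
    · intro b hb; simp at hb
      rcases hb with hb | hb
      · omega
      · obtain ⟨y, _, hy⟩ := hb; omega
    rw [List.pairwise_cons]
    constructor
    · intro b hb
      obtain ⟨y, _, hy⟩ := List.mem_map.1 hb; omega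
    · exact List.Pairwise.map _ (fun a b hab => by omega) hsort
  · intro x
    rw [count_shS]
    split
    · omega
    · exact hcount _
  · unfold shS
    simp only [List.sum_cons, sum_map_add_one, hlen]
    rw [hsum]
    have e1 := cEq ε n hε
    have e2 := cEq ε (n-1) hε
    rw [← hM] at e1
    rw [← hM2] at e2
    have e3 := msum_closed ε n hε
    have e4 := msum_closed ε (n-1) hε
    rw [← hM] at e3
    rw [← hM2] at e4
    -- msum M = msum (M-2) + (M-2)
    have e5 : msum M = msum (M - 2) + (M - 2) := by
      have := msum_step (M - 2)
      rw [show M - 2 + 2 = M from by omega] at this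
      exact this
    omega

lemma unshift (r ε n M : ℕ) (hε : ε ≤ 1) (hM : M = ε + 2 * n) (rest : List ℕ)
    (h : (0 :: 0 :: rest) ∈ SS r M ε) (hpos : ∀ x ∈ rest, 1 ≤ x) :
    rest.map (fun x => x - 1) ∈ SS r (M - 2) ε ∧ (0 : ℕ) :: 0 :: rest = shS (rest.map (fun x => x - 1)) := by
  obtain ⟨hlen, hsort, hcount, hsum⟩ := h
  simp only [List.length_cons] at hlen
  have hM2 : M - 2 = ε + 2 * (n - 1) := by
    rcases Nat.eq_zero_or_pos n with h | h
    · exfalso; omega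
    · omega
  have hrsort : rest.Pairwise (· ≤ ·) := (hsort.tail).tail
  constructor
  · refine ⟨by simp; omega, ?_, ?_, ?_⟩
    · exact List.Pairwise.map _ (fun a b hab => by omega) hrsort
    · intro z
      rw [count_map_pred rest hpos]
      have := hcount (z + 1)
      rw [List.count_cons, List.count_cons] at this
      omega
    · have hsum2 : rest.sum = r + (M ^ 2 - 2 * M + ε) / 4 := by
        simpa using hsum
      have := sum_map_pred rest hpos
      have e1 := cEq ε n hε
      have e2 := cEq ε (n-1) hε
      rw [← hM] at e1
      rw [← hM2] at e2
      have e5 : msum M = msum (M - 2) + (M - 2) := by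
        have := msum_step (M - 2)
        rw [show M - 2 + 2 = M from by omega] at this
        exact this
      omega
  · unfold shS
    rw [map_pred_succ rest hpos]

lemma complB_shS (t : ℕ) (l₀ : List ℕ) (ht : 1 ≤ t) :
    complB t (shS l₀) = complB (t - 1) l₀ := by
  rw [complB_eq_mkL, complB_eq_mkL]
  have h1 : t - 1 + 1 = t := by omega
  rw [h1]
  rw [show t + 1 = t + 1 from rfl]
  rw [show mkL (fun x => 2 - (shS l₀).count (t - x)) (t + 1)
      = mkL (fun x => 2 - (shS l₀).count (t - x)) t
        ++ List.replicate (2 - (shS l₀).count (t - t)) t from mkL_succ _ t]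
  have h2 : (shS l₀).count (t - t) = 2 := by
    rw [Nat.sub_self, count_shS]; simp
  rw [h2]
  simp only [Nat.sub_self, List.replicate_zero, List.append_nil]
  apply mkL_congr
  intro x hx
  rw [count_shS]
  have h3 : ¬ (t - x = 0) := by omega
  rw [if_neg h3]
  have h4 : t - x - 1 = t - 1 - x := by omega
  rw [h4]

lemma decLast_shS (k : ℕ) (l₀ : List ℕ) (hk : k ≤ l₀.length)
    (hpos : ∀ y ∈ l₀.drop (l₀.length - k), 1 ≤ y) :
    decLast k (shS l₀) = shS (decLast k l₀) := by
  unfold decLast shS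
  simp only [List.length_cons, List.length_map]
  have h1 : l₀.length + 1 + 1 - k = (l₀.length - k) + 2 := by omega
  rw [h1]
  set m := l₀.length - k with hm
  have htake : (0 :: 0 :: l₀.map (fun x => x + 1)).take (m + 2)
      = 0 :: 0 :: (l₀.map (fun x => x + 1)).take m := by simp
  have hdrop : (0 :: 0 :: l₀.map (fun x => x + 1)).drop (m + 2)
      = (l₀.map (fun x => x + 1)).drop m := by simp
  rw [htake, hdrop, ← List.map_take, ← List.map_drop, List.map_append]
  have hA : (List.map (fun x => x + 1) (l₀.drop m)).map (fun x => x - 1) = l₀.drop m := by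
    rw [List.map_map]
    have hcg : ∀ y ∈ l₀.drop m, ((fun x => x - 1) ∘ fun x => x + 1) y = id y := by
      intro y hy; simp
    rw [List.map_congr_left hcg, List.map_id]
  have hB : List.map (fun x => x + 1) ((l₀.drop m).map (fun x => x - 1)) = l₀.drop m :=
    map_pred_succ _ hpos
  rw [hA, hB]
  simp

lemma count_concat (x : ℕ) (u v : List ℕ) (b c : ℕ) :
    (u ++ [b, c] ++ v).count x
      = u.count x + v.count x + ((if x = b then 1 else 0) + (if x = c then 1 else 0)) := by
  simp [List.count_append, List.count_cons]
  split_ifs <;> omega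

def fl (Y : ℕ) (L : List ℕ) : ℕ := (L.filter (fun v => decide (v < Y))).length

lemma fl_append (Y : ℕ) (xs ys : List ℕ) : fl Y (xs ++ ys) = fl Y xs + fl Y ys := by
  simp [fl, List.filter_append]

lemma fl_pair (Y b c : ℕ) :
    fl Y [b, c] = (if b < Y then 1 else 0) + (if c < Y then 1 else 0) := by
  simp only [fl, List.filter_cons, List.filter_nil]
  split_ifs with h1 h2 h2 <;> simp_all

lemma kf_append (w : ℕ) (xs ys : List ℕ) : kf w (xs ++ ys) = kf w xs + kf w ys := by
  simp [kf, List.filter_append]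

lemma kf_pair (w b c : ℕ) :
    kf w [b, c] = (if w < b then 1 else 0) + (if w < c then 1 else 0) := by
  simp only [kf, List.filter_cons, List.filter_nil]
  split_ifs with h1 h2 h2 <;> simp_all

lemma pairEquiv_shS (l₀ l₀' L L' : List ℕ) (Q : List ℕ × List ℕ)
    (h : PairEquivS (l₀, l₀') Q) (h1 : L = shS l₀) (h2 : L' = shS l₀') :
    PairEquivS (L, L') Q := by
  obtain ⟨i, j, e1, e2⟩ := h
  refine ⟨i, j + 1, ?_, ?_⟩
  · show shS^[i] L = shS^[j+1] Q.1
    rw [h1, ← Function.iterate_succ_apply, Function.iterate_succ_apply',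
      Function.iterate_succ_apply']
    exact congrArg shS e1
  · show shS^[i] L' = shS^[j+1] Q.2
    rw [h2, ← Function.iterate_succ_apply, Function.iterate_succ_apply',
      Function.iterate_succ_apply']
    exact congrArg shS e2

lemma main_lemma : ∀ (n r M ε : ℕ), ε ≤ 1 → M = ε + 2 * n →
    ∀ l l', l ∈ SS r M ε → l' ∈ SS r M ε → PairP 2 l l' →
    InducedSB r ε l l' ∨
    (∃ T, ∀ t, T ≤ t → InducedSB r ε (complB t l') (complB t l)) ∨
    PairEquivS (l, l') ([0, 2], [1, 1]) ∨
    PairEquivS (l, l') ([0, 0, 2], [0, 1, 1]) ∨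
    PairEquivS (l, l') ([0, 2, 2], [1, 1, 2]) ∨
    PairEquivS (l, l') ([0, 0, 2, 2], [0, 1, 1, 2]) := by
  intro n
  induction n with
  | zero =>
    intro r M ε hε hM l l' hl hl' hP
    exfalso
    obtain ⟨a, u, v, hlu, _⟩ := hP
    have := hl.1
    rw [hlu] at this
    simp at this
    omega
  | succ m ih =>
    intro r M ε hε hM l l' hl hl' hP
    obtain ⟨a, u, v, hlu, hlu'2⟩ := hP
    have hlu' : l' = u ++ [a + 1, a + 1] ++ v := by rw [hlu'2]; norm_num
    clear hlu'2
    -- sortedness facts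
    have hsort : (u ++ ([a, a + 2] ++ v)).Pairwise (· ≤ ·) := by
      have := hl.2.1
      rw [hlu, List.append_assoc] at this
      exact this
    obtain ⟨hu_sorted, hmid_sorted, hcross⟩ := List.pairwise_append.1 hsort
    have hua : ∀ x ∈ u, x ≤ a := fun x hx => hcross x hx a (by simp)
    have hva : ∀ y ∈ v, a + 2 ≤ y := by
      have h1 := (List.pairwise_cons.1 hmid_sorted).2
      exact (List.pairwise_cons.1 h1).1
    have hva0 : ∀ x, x < a + 2 → v.count x = 0 := fun x hx =>
      List.count_eq_zero.2 (fun hmem => by have := hva x hmem; omega)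
    have hua0 : ∀ x, a < x → u.count x = 0 := fun x hx =>
      List.count_eq_zero.2 (fun hmem => by have := hua x hmem; omega)
    -- count relations
    have hcl : ∀ x, l.count x
        = u.count x + v.count x + ((if x = a then 1 else 0) + (if x = a + 2 then 1 else 0)) := by
      intro x; rw [hlu]; exact count_concat x u v a (a+2)
    have hcl' : ∀ x, l'.count x
        = u.count x + v.count x + ((if x = a + 1 then 1 else 0) + (if x = a + 1 then 1 else 0)) := by
      intro x; rw [hlu']; exact count_concat x u v (a+1) (a+1)
    have hgen : ∀ x, (x + 1 ≤ a ∨ a + 3 ≤ x) → l.count x = l'.count x := by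
      intro x hx
      rw [hcl x, hcl' x, if_neg (by omega), if_neg (by omega), if_neg (by omega)]
    have hca : l.count a = l'.count a + 1 := by
      rw [hcl a, hcl' a, if_pos rfl, if_neg (by omega), if_neg (by omega)]
    have hca2 : l.count (a + 2) = l'.count (a + 2) + 1 := by
      rw [hcl (a+2), hcl' (a+2), if_neg (by omega), if_pos rfl, if_neg (by omega)]
    have hlenM : u.length + 2 + v.length = M := by
      have := hl.1
      rw [hlu] at this
      simp at this
      omega
    have hcountl := hl.2.2.1
    have hcountl' := hl'.2.2.1
    -- main case split
    rcases Nat.eq_zero_or_pos a with ha0 | ha1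
    · -- a = 0
      subst ha0
      by_cases hD : ∃ yv ∈ v, 3 ≤ yv
      · obtain ⟨yv, hyv, hyv3⟩ := hD
        by_cases hD1 : l.count 2 + l.count 3 ≤ 2
        · -- top cut at w = 2
          left
          have h1' : l'.count 2 + l'.count 3 ≤ 2 := by
            have e2 := hca2
            have e3 := hgen 3 (by omega)
            norm_num at e2
            omega
          have he : ∃ y ∈ l, 2 < y := ⟨yv, by rw [hlu]; simp; try tauto, by omega⟩
          have he' : ∃ y ∈ l', 2 < y := ⟨yv, by rw [hlu']; simp; try tauto, by omega⟩
          have hk : kf 2 l = kf 2 l' := by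
            rw [hlu, hlu', kf_append, kf_append, kf_append, kf_append, kf_pair, kf_pair]
            split_ifs <;> omega
          have hcnt : l.count 2 + l.count (2 + 1) ≤ 2 := by simpa using hD1
          have hcnt' : l'.count 2 + l'.count (2 + 1) ≤ 2 := by simpa using h1'
          exact induced_of_cut r ε (m+1) M 2 hε hM l l' hl hl' hcnt hcnt' he he' hk
        · -- bottom cut at y = 2
          right; left
          push_neg at hD1
          have hcnt : 2 ≤ l.count 2 + l.count (2 + 1) := by simpa using Nat.le_of_lt hD1
          have hcnt' : 2 ≤ l'.count 2 + l'.count (2 + 1) := by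
            have e2 := hca2
            have e3 := hgen 3 (by omega)
            norm_num at e2 ⊢
            omega
          have hdef : ∃ z, z ≤ 2 ∧ l.count z ≤ 1 := by
            refine ⟨1, by omega, ?_⟩
            rw [hcl 1, if_neg (by omega), if_neg (by omega)]
            have := hua0 1 (by omega)
            have := hva0 1 (by omega)
            omega
          have hdef' : ∃ z, z ≤ 2 ∧ l'.count z ≤ 1 := by
            refine ⟨0, by omega, ?_⟩
            have h1 := hcl 0
            have h2 := hcl' 0
            rw [if_pos rfl, if_neg (by omega)] at h1
            rw [if_neg (by omega)] at h2
            have := hcountl 0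
            omega
          have hflt : (l.filter (fun v => decide (v < 2 + 1))).length
              = (l'.filter (fun v => decide (v < 2 + 1))).length := by
            show fl 3 l = fl 3 l'
            rw [hlu, hlu', fl_append, fl_append, fl_append, fl_append, fl_pair, fl_pair]
            split_ifs <;> omega
          exact induced_compl r ε (m+1) M 2 hε hM l l' hl hl' hcnt hcnt' hdef hdef' hflt
      · -- exceptional cases
        push_neg at hD
        have hv2 : ∀ yv ∈ v, yv = 2 := fun yv hyv => by
          have := hva yv hyv; have := hD yv hyv; omega
        have hvlen : v.length ≤ 1 := by
          have h1 : v.count 2 = v.length := List.count_eq_length.2 (fun b hb => (hv2 b hb).symm)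
          have h2 := hcl 2
          rw [if_neg (by omega), if_pos rfl] at h2
          have := hcountl 2
          omega
        have hulen : u.length ≤ 1 := by
          have h0 : ∀ b ∈ u, b = 0 := fun b hb => by have := hua b hb; omega
          have h1 : u.count 0 = u.length := List.count_eq_length.2 (fun b hb => (h0 b hb).symm)
          have h2 := hcl 0
          rw [if_pos rfl, if_neg (by omega)] at h2
          have := hcountl 0
          have := hva0 0 (by omega)
          omega
        have hucase : u = [] ∨ u = [0] := by
          match u, hulen with
          | [], _ => exact Or.inl rfl
          | [x], _ =>
            have : x = 0 := by have := hua x (by simp); omega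
            exact Or.inr (by rw [this])
          | x :: y :: u3, h => simp at h
        have hvcase : v = [] ∨ v = [2] := by
          match v, hvlen with
          | [], _ => exact Or.inl rfl
          | [x], _ =>
            have : x = 2 := hv2 x (by simp)
            exact Or.inr (by rw [this])
          | x :: y :: v3, h => simp at h
        rcases hucase with hu | hu <;> rcases hvcase with hv | hv <;>
          subst hu <;> subst hv <;> simp only [List.nil_append, List.append_nil, List.cons_append] at hlu hlu'
        · right; right; left
          exact ⟨0, 0, by simp [hlu], by simp [hlu']⟩
        · right; right; right; right; left
          exact ⟨0, 0, by simp [hlu], by simp [hlu']⟩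
        · right; right; right; left
          exact ⟨0, 0, by simp [hlu], by simp [hlu']⟩
        · right; right; right; right; right
          exact ⟨0, 0, by simp [hlu], by simp [hlu']⟩
    · -- a ≥ 1
      by_cases hA : l.count (a - 1) + l.count a ≤ 2
      · -- top cut at w = a - 1
        left
        have hgm1 := hgen (a - 1) (by omega)
        have hcnt : l.count (a-1) + l.count (a - 1 + 1) ≤ 2 := by
          rw [show a - 1 + 1 = a from by omega]; exact hA
        have hcnt' : l'.count (a-1) + l'.count (a - 1 + 1) ≤ 2 := by
          rw [show a - 1 + 1 = a from by omega]
          omega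
        have he : ∃ y ∈ l, a - 1 < y := ⟨a + 2, by rw [hlu]; simp, by omega⟩
        have he' : ∃ y ∈ l', a - 1 < y := ⟨a + 1, by rw [hlu']; simp, by omega⟩
        have hk : kf (a-1) l = kf (a-1) l' := by
          rw [hlu, hlu', kf_append, kf_append, kf_append, kf_append, kf_pair, kf_pair]
          split_ifs <;> omega
        exact induced_of_cut r ε (m+1) M (a-1) hε hM l l' hl hl' hcnt hcnt' he he' hk
      · push_neg at hA
        have hA3 : 3 ≤ l.count (a - 1) + l.count a := hA
        by_cases h0 : l.count 0 ≤ 1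
        · -- bottom cut at ys
          right; left
          set ys := Nat.findGreatest (fun y => l.count y ≤ 1) (a - 1) with hysdef
          have hys1 : l.count ys ≤ 1 :=
            Nat.findGreatest_spec (P := fun y => l.count y ≤ 1) (m := 0) (Nat.zero_le _) h0
          have hysle : ys ≤ a - 1 := Nat.findGreatest_le _
          have hmax : ∀ z, ys < z → z ≤ a - 1 → 2 ≤ l.count z := by
            intro z h1 h2
            have := Nat.findGreatest_is_greatest (P := fun y => l.count y ≤ 1) h1 h2
            omega
          have hcnt : 2 ≤ l.count ys + l.count (ys + 1) := by
            by_cases hc : ys = a - 1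
            · rw [hc, show a - 1 + 1 = a from by omega]
              omega
            · have := hmax (ys + 1) (by omega) (by omega)
              omega
          have hgys := hgen ys (by omega)
          have hcnt' : 2 ≤ l'.count ys + l'.count (ys + 1) := by
            by_cases hc : ys = a - 1
            · rw [hc, show a - 1 + 1 = a from by omega]
              rw [hc] at hgys
              omega
            · have h2 := hmax (ys + 1) (by omega) (by omega)
              have h3 := hgen (ys + 1) (by omega)
              omega
          have hdef : ∃ z, z ≤ ys ∧ l.count z ≤ 1 := ⟨ys, le_rfl, hys1⟩
          have hdef' : ∃ z, z ≤ ys ∧ l'.count z ≤ 1 := ⟨ys, le_rfl, by omega⟩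
          have hflt : (l.filter (fun v => decide (v < ys + 1))).length
              = (l'.filter (fun v => decide (v < ys + 1))).length := by
            show fl (ys + 1) l = fl (ys + 1) l'
            rw [hlu, hlu', fl_append, fl_append, fl_append, fl_append, fl_pair, fl_pair]
            split_ifs <;> omega
          exact induced_compl r ε (m+1) M ys hε hM l l' hl hl' hcnt hcnt' hdef hdef' hflt
        · -- unshift and recurse
          have h02 : l.count 0 = 2 := by
            have := hcountl 0
            omega
          have hcu0 : u.count 0 = 2 := by
            have h2 := hcl 0
            rw [if_neg (by omega), if_neg (by omega)] at h2
            have := hva0 0 (by omega)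
            omega
          match u, hu_sorted, hua, hcu0, hlu, hlu', hlenM with
          | [], _, _, hcu0, _, _, _ => simp at hcu0
          | [x], _, _, hcu0, _, _, _ =>
            exfalso
            have hle : ([x] : List ℕ).count 0 ≤ ([x] : List ℕ).length :=
              List.count_le_length (a := (0:ℕ)) (l := [x])
            simp at hle
            omega
          | x :: y :: u3, hu_sorted, hua, hcu0, hlu, hlu', hlenM =>
            have hx0 : x = 0 := by
              have hmem : (0:ℕ) ∈ x :: y :: u3 := List.count_pos_iff.1 (by omega)
              have hxb := (List.pairwise_cons.1 hu_sorted).1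
              simp at hmem
              rcases hmem with h | h | h
              · omega
              · have := hxb y (by simp); omega
              · have := hxb 0 (by simp [h]); omega
            subst hx0
            have hy0 : y = 0 := by
              have hcy : (y :: u3).count 0 = 1 := by
                have h2 : ((0:ℕ) :: y :: u3).count 0 = (y :: u3).count 0 + 1 := by
                  simp [List.count_cons]
                omega
              have hmem : (0:ℕ) ∈ y :: u3 := List.count_pos_iff.1 (by omega)
              have hyb := (List.pairwise_cons.1 (List.pairwise_cons.1 hu_sorted).2).1
              simp at hmem
              rcases hmem with h | h
              · omega
              · have := hyb 0 (by simp [h]); omega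
            subst hy0
            have hu30 : (u3 : List ℕ).count 0 = 0 := by
              have h1 : ((0:ℕ) :: 0 :: u3).count 0 = u3.count 0 + 2 := by
                simp [List.count_cons]
              omega
            have hu3pos : ∀ z ∈ u3, 1 ≤ z := by
              intro z hz
              rcases Nat.eq_zero_or_pos z with h | h
              · exfalso; rw [List.count_eq_zero] at hu30; rw [h] at hz; exact hu30 hz
              · exact h
            set rest := u3 ++ [a, a + 2] ++ v with hrest
            set rest' := u3 ++ [a + 1, a + 1] ++ v with hrest'
            have hlrest : l = 0 :: 0 :: rest := by rw [hlu]; simp [hrest]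
            have hlrest' : l' = 0 :: 0 :: rest' := by rw [hlu']; simp [hrest']
            have hrestpos : ∀ z ∈ rest, 1 ≤ z := by
              intro z hz
              rw [hrest] at hz
              rcases List.mem_append.1 hz with h | h
              · rcases List.mem_append.1 h with h2 | h2
                · exact hu3pos z h2
                · simp at h2; omega
              · have := hva z h; omega
            have hrestpos' : ∀ z ∈ rest', 1 ≤ z := by
              intro z hz
              rw [hrest'] at hz
              rcases List.mem_append.1 hz with h | h
              · rcases List.mem_append.1 h with h2 | h2
                · exact hu3pos z h2
                · simp at h2; omega
              · have := hva z h; omega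
            obtain ⟨hmem0, hshift⟩ := unshift r ε (m+1) M hε hM rest (by rw [← hlrest]; exact hl) hrestpos
            obtain ⟨hmem0', hshift'⟩ := unshift r ε (m+1) M hε hM rest' (by rw [← hlrest']; exact hl') hrestpos'
            set l₀ := rest.map (fun x => x - 1) with hl₀
            set l₀' := rest'.map (fun x => x - 1) with hl₀'
            have hshiftEq : l = shS l₀ := by rw [hlrest, hshift]
            have hshiftEq' : l' = shS l₀' := by rw [hlrest', hshift']
            have hP₀ : PairP 2 l₀ l₀' := by
              refine ⟨a - 1, u3.map (fun x => x - 1), v.map (fun x => x - 1), ?_, ?_⟩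
              · rw [hl₀, hrest, List.map_append, List.map_append]
                congr 1
                congr 1
                simp
                omega
              · rw [hl₀', hrest', List.map_append, List.map_append]
                congr 1
                congr 1
                simp
                omega
            have hM2 : M - 2 = ε + 2 * m := by omega
            have hlen₀ : l₀.length = M - 2 := hmem0.1
            have hlen₀' : l₀'.length = M - 2 := hmem0'.1
            have hlenl : l.length = M := hl.1
            have hlenl' : l'.length = M := hl'.1
            rcases ih r (M - 2) ε hε hM2 l₀ l₀' hmem0 hmem0' hP₀ with hI | hII | h3 | h4 | h5 | h6
            · left
              obtain ⟨k, hk1, hk2, hk3, hk4, hp, hp', hm1, hm2⟩ := hI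
              rw [hlen₀] at hk3 hm1
              rw [hlen₀'] at hk4 hm2
              have hposdrop : ∀ y ∈ l.drop (l.length - k), 1 ≤ y := by
                intro y hy
                rw [hshiftEq] at hy
                have hq : (shS l₀).length = l₀.length + 2 := by simp [shS]
                rw [hq] at hy
                have hq2 : l₀.length + 2 - k = (l₀.length - k) + 2 := by
                  rw [hlen₀]; omega
                rw [hq2] at hy
                have : y ∈ (l₀.map (fun x => x + 1)) := by
                  have hdd : (shS l₀).drop ((l₀.length - k) + 2) = (l₀.map (fun x => x + 1)).drop (l₀.length - k) := by
                    simp [shS]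
                  rw [hdd] at hy
                  exact List.drop_subset _ _ hy
                obtain ⟨z, _, hz⟩ := List.mem_map.1 this
                omega
              have hposdrop' : ∀ y ∈ l'.drop (l'.length - k), 1 ≤ y := by
                intro y hy
                rw [hshiftEq'] at hy
                have hq : (shS l₀').length = l₀'.length + 2 := by simp [shS]
                rw [hq] at hy
                have hq2 : l₀'.length + 2 - k = (l₀'.length - k) + 2 := by
                  rw [hlen₀']; omega
                rw [hq2] at hy
                have : y ∈ (l₀'.map (fun x => x + 1)) := by
                  have hdd : (shS l₀').drop ((l₀'.length - k) + 2) = (l₀'.map (fun x => x + 1)).drop (l₀'.length - k) := by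
                    simp [shS]
                  rw [hdd] at hy
                  exact List.drop_subset _ _ hy
                obtain ⟨z, _, hz⟩ := List.mem_map.1 this
                omega
              refine ⟨k, hk1, hk2, by omega, by omega, hposdrop, hposdrop', ?_, ?_⟩
              · rw [hlenl, hshiftEq, decLast_shS k l₀ (by omega) hp]
                exact shS_mem (r - k) ε (m+1) M hε hM (by omega) _ hm1
              · rw [hlenl', hshiftEq', decLast_shS k l₀' (by omega) hp']
                exact shS_mem (r - k) ε (m+1) M hε hM (by omega) _ hm2
            · right; left
              obtain ⟨T, hT⟩ := hII
              refine ⟨T + 1, fun t ht => ?_⟩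
              have e1 : complB t l = complB (t - 1) l₀ := by
                rw [hshiftEq]; exact complB_shS t l₀ (by omega)
              have e1' : complB t l' = complB (t - 1) l₀' := by
                rw [hshiftEq']; exact complB_shS t l₀' (by omega)
              rw [e1, e1']
              exact hT (t - 1) (by omega)
            · right; right; left
              exact pairEquiv_shS l₀ l₀' l l' _ h3 hshiftEq hshiftEq'
            · right; right; right; left
              exact pairEquiv_shS l₀ l₀' l l' _ h4 hshiftEq hshiftEq'
            · right; right; right; right; left
              exact pairEquiv_shS l₀ l₀' l l' _ h5 hshiftEq hshiftEq'
            · right; right; right; right; right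
              exact pairEquiv_shS l₀ l₀' l l' _ h6 hshiftEq hshiftEq'

theorem stmt10' (r M ε : ℕ) (hε : ε ≤ 1) (hM : ∃ n, M = ε + 2 * n)
    (l l' : List ℕ) (hl : l ∈ SS r M ε) (hl' : l' ∈ SS r M ε) (hP : PairP 2 l l') :
    InducedS r ε l l' ∨
    (∃ T, ∀ t, T ≤ t → InducedS r ε (complB t l') (complB t l)) ∨
    PairEquivS (l, l') ([0, 2], [1, 1]) ∨
    PairEquivS (l, l') ([0, 0, 2], [0, 1, 1]) ∨
    PairEquivS (l, l') ([0, 2, 2], [1, 1, 2]) ∨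
    PairEquivS (l, l') ([0, 0, 2, 2], [0, 1, 1, 2]) := by
  obtain ⟨n, hMn⟩ := hM
  rcases main_lemma n r M ε hε hMn l l' hl hl' hP with h | h | h | h | h | h
  · exact Or.inl (inducedSB_weaken h)
  · obtain ⟨T, hT⟩ := h
    exact Or.inr (Or.inl ⟨T, fun t ht => inducedSB_weaken (hT t ht)⟩)
  · exact Or.inr (Or.inr (Or.inl h))
  · exact Or.inr (Or.inr (Or.inr (Or.inl h)))
  · exact Or.inr (Or.inr (Or.inr (Or.inr (Or.inl h))))
  · exact Or.inr (Or.inr (Or.inr (Or.inr (Or.inr h))))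

theorem stmt10 (r M ε : ℕ) (hε : ε ≤ 1) (hM : ∃ n, M = ε + 2 * n)
    (l l' : List ℕ) (hl : l ∈ SS r M ε) (hl' : l' ∈ SS r M ε) (hP : PairP 2 l l') :
    InducedS r ε l l' ∨
    (∃ T, ∀ t, T ≤ t → InducedS r ε (complB t l') (complB t l)) ∨
    PairEquivS (l, l') ([0, 2], [1, 1]) ∨
    PairEquivS (l, l') ([0, 0, 2], [0, 1, 1]) ∨
    PairEquivS (l, l') ([0, 2, 2], [1, 1, 2]) ∨
    PairEquivS (l, l') ([0, 0, 2, 2], [0, 1, 1, 2]) :=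
  stmt10' r M ε hε hM l l' hl hl' hP
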